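/- Let a, a1, a2, c, n be positive integers with (4a+3)/7 + (4a1+3)/7 + (4a2+3)/7 + c − 2 ≥ (4n−4)/7. If the residue triple (4a+3, 4a1+3, 4a2+3) modulo 7 is not one of (1,0,0), (4,0,4), (4,4,0), (0,4,4), then max over A1, A2 ∈ {0,1} of [ ⌈(4(a−A1−A2)+3)/7⌉ + ⌈(4(a1−A1)+3)/7⌉ + ⌈(4(a2−A2)+3)/7⌉ + c − (1−A1) − (1−A2) ] ≥ ⌈(4n+3)/7⌉. -/
import Mathlib
set_option maxHeartbeats 4000000


lemma ceil7 (m : ℤ) : ⌈(m:ℚ)/7⌉ = (m+6)/7 := by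
  have h1 : 7*((m+6)/7) ≤ m+6 := by omega
  have h2 : m+6 < 7*((m+6)/7)+7 := by omega
  have c1 : ((7*((m+6)/7) : ℤ):ℚ) ≤ ((m+6:ℤ):ℚ) := by exact_mod_cast h1
  have c2 : ((m+6:ℤ):ℚ) < ((7*((m+6)/7)+7 : ℤ):ℚ) := by exact_mod_cast h2
  push_cast at c1 c2
  rw [Int.ceil_eq_iff]
  constructor
  · rw [lt_div_iff₀ (by norm_num : (0:ℚ) < 7)]
    linarith
  · rw [div_le_iff₀ (by norm_num : (0:ℚ) < 7)]
    have c3 : ((m:ℤ):ℚ) ≤ ((7*((m+6)/7) : ℤ):ℚ) := by exact_mod_cast by omega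
    push_cast at c3
    linarith


/-- Lemma 2.2(4): for positive integers `a, a1, a2, c, n` with
`(4a+3)/7 + (4a1+3)/7 + (4a2+3)/7 + c - 2 ≥ (4n-4)/7`, if the residue triple
`(4a+3, 4a1+3, 4a2+3) mod 7` is not one of `(1,0,0), (4,0,4), (4,4,0), (0,4,4)`,
then the maximum over `A1, A2 ∈ {0,1}` of
`⌈(4(a-A1-A2)+3)/7⌉ + ⌈(4(a1-A1)+3)/7⌉ + ⌈(4(a2-A2)+3)/7⌉ + c - (1-A1) - (1-A2)`
is at least `⌈(4n+3)/7⌉`. -/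
theorem ineq_lemma_two_part4 (a a1 a2 c n : ℕ)
    (ha : 0 < a) (ha1 : 0 < a1) (ha2 : 0 < a2) (hc : 0 < c) (hn : 0 < n)
    (hineq : (4 * (a : ℚ) + 3) / 7 + (4 * (a1 : ℚ) + 3) / 7 + (4 * (a2 : ℚ) + 3) / 7
      + (c : ℚ) - 2 ≥ (4 * (n : ℚ) - 4) / 7)
    (hmod : ((4 * a + 3) % 7, (4 * a1 + 3) % 7, (4 * a2 + 3) % 7) ∉
      ([(1,0,0),(4,0,4),(4,4,0),(0,4,4)] : List (ℕ × ℕ × ℕ))) :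
    ⌈(4 * (n : ℚ) + 3) / 7⌉ ≤
      max
        (max
          (⌈(4 * (a : ℚ) + 3) / 7⌉ + ⌈(4 * (a1 : ℚ) + 3) / 7⌉
            + ⌈(4 * (a2 : ℚ) + 3) / 7⌉ + (c : ℤ) - 2)
          (⌈(4 * ((a : ℚ) - 1) + 3) / 7⌉ + ⌈(4 * (a1 : ℚ) + 3) / 7⌉
            + ⌈(4 * ((a2 : ℚ) - 1) + 3) / 7⌉ + (c : ℤ) - 1))
        (max
          (⌈(4 * ((a : ℚ) - 1) + 3) / 7⌉ + ⌈(4 * ((a1 : ℚ) - 1) + 3) / 7⌉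
            + ⌈(4 * (a2 : ℚ) + 3) / 7⌉ + (c : ℤ) - 1)
          (⌈(4 * ((a : ℚ) - 1 - 1) + 3) / 7⌉ + ⌈(4 * ((a1 : ℚ) - 1) + 3) / 7⌉
            + ⌈(4 * ((a2 : ℚ) - 1) + 3) / 7⌉ + (c : ℤ))) := by
  have Hq : (4 * (n:ℚ) - 4) ≤ (4*(a:ℚ)+3) + (4*(a1:ℚ)+3) + (4*(a2:ℚ)+3) + 7*(c:ℚ) - 14 := by
    linarith
  have H : (4 * (n:ℤ) - 4) ≤ (4*(a:ℤ)+3) + (4*(a1:ℤ)+3) + (4*(a2:ℤ)+3) + 7*(c:ℤ) - 14 := by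
    exact_mod_cast Hq
  simp only [List.mem_cons, List.not_mem_nil, or_false, Prod.mk.injEq, not_or] at hmod
  have ea : (4*(a:ℚ)+3) = (((4*(a:ℤ)+3) :ℤ):ℚ) := by push_cast; ring
  have ea' : (4*((a:ℚ)-1)+3) = (((4*(a:ℤ)-1) :ℤ):ℚ) := by push_cast; ring
  have ea'' : (4*((a:ℚ)-1-1)+3) = (((4*(a:ℤ)-5) :ℤ):ℚ) := by push_cast; ring
  have eb : (4*(a1:ℚ)+3) = (((4*(a1:ℤ)+3) :ℤ):ℚ) := by push_cast; ring
  have eb' : (4*((a1:ℚ)-1)+3) = (((4*(a1:ℤ)-1) :ℤ):ℚ) := by push_cast; ring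
  have ec : (4*(a2:ℚ)+3) = (((4*(a2:ℤ)+3) :ℤ):ℚ) := by push_cast; ring
  have ec' : (4*((a2:ℚ)-1)+3) = (((4*(a2:ℤ)-1) :ℤ):ℚ) := by push_cast; ring
  have en : (4*(n:ℚ)+3) = (((4*(n:ℤ)+3) :ℤ):ℚ) := by push_cast; ring
  rw [ea, ea', ea'', eb, eb', ec, ec', en, ceil7, ceil7, ceil7, ceil7, ceil7, ceil7, ceil7, ceil7]
  rw [le_max_iff, le_max_iff, le_max_iff]
  obtain ⟨qa, ra, hra, rfl⟩ : ∃ q r, r < 7 ∧ a = 7*q+r :=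
    ⟨a/7, a%7, Nat.mod_lt _ (by norm_num), by omega⟩
  obtain ⟨qb, rb, hrb, rfl⟩ : ∃ q r, r < 7 ∧ a1 = 7*q+r :=
    ⟨a1/7, a1%7, Nat.mod_lt _ (by norm_num), by omega⟩
  obtain ⟨qc, rc, hrc, rfl⟩ : ∃ q r, r < 7 ∧ a2 = 7*q+r :=
    ⟨a2/7, a2%7, Nat.mod_lt _ (by norm_num), by omega⟩
  interval_cases ra <;> interval_cases rb <;> interval_cases rc <;> omega
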